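/- Let P = (A,B,R), P' = (A',B',R'), Q = (C,B,T) and Q' = (C',B',T') be relations. If ONE has a winning strategy in the game G(P',Q') and ONE has a winning strategy in the game G(P,Q), then ONE has a winning strategy in the game G(P⊗P', Q⊗Q'). -/
import Mathlib


open Set

/-- `GDom R` is the set of dominating families of the relation `R`:
sets `Z ⊆ B` such that every `a ∈ A` is dominated by some `b ∈ Z`. -/
def GDom {α β : Type*} (R : α → β → Prop) : Set (Set β) :=
  {Z | ∀ a : α, ∃ b ∈ Z, R a b}

/-- A relation is total: every element of the domain is dominated by something. -/
def IsTotalRel {α β : Type*} (R : α → β → Prop) : Prop :=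
  ∀ a : α, ∃ b : β, R a b

/-- The product of two relations. -/
def GProd {α β α' β' : Type*} (R : α → β → Prop) (R' : α' → β' → Prop) :
    α × α' → β × β' → Prop :=
  fun a b => R a.1 b.1 ∧ R' a.2 b.2

/-- The finite history consisting of the first `n` moves of the sequence `b`. -/
def GHist {β : Type*} (b : ℕ → β) (n : ℕ) : List β :=
  List.ofFn fun i : Fin n => b i

/-- ONE has a winning strategy in the game `G(P,Q)`: in inning `n` ONE plays `aₙ ∈ A`,
TWO answers `bₙ` with `R aₙ bₙ`; ONE wins iff `{bₙ : n} ∈ GDom T`. -/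
def OneWinsG {α β γ : Type*} (R : α → β → Prop) (T : γ → β → Prop) : Prop :=
  ∃ σ : List β → α, ∀ b : ℕ → β,
    (∀ n, R (σ (GHist b n)) (b n)) → Set.range b ∈ GDom T

/-- TWO has a winning strategy in the game `G(P,Q)`. -/
def TwoWinsG {α β γ : Type*} (R : α → β → Prop) (T : γ → β → Prop) : Prop :=
  ∃ τ : List α → β, ∀ a : ℕ → α,
    (∀ n, R (a n) (τ (GHist a (n + 1)))) ∧
    Set.range (fun n => τ (GHist a (n + 1))) ∉ GDom T

/-- ONE has a winning strategy in the game `G₁(𝒜,ℬ)`: in inning `n` ONE plays `Aₙ ∈ 𝒜`,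
TWO answers `bₙ ∈ Aₙ`; TWO wins iff `{bₙ : n} ∈ ℬ`. -/
def OneWinsG1 {β : Type*} (𝒜 ℬ : Set (Set β)) : Prop :=
  ∃ σ : List β → Set β, (∀ h, σ h ∈ 𝒜) ∧
    ∀ b : ℕ → β, (∀ n, b n ∈ σ (GHist b n)) → Set.range b ∉ ℬ

/-- TWO has a winning strategy in the game `G₁(𝒜,ℬ)`. -/
def TwoWinsG1 {β : Type*} (𝒜 ℬ : Set (Set β)) : Prop :=
  ∃ τ : List (Set β) → β, ∀ S : ℕ → Set β, (∀ n, S n ∈ 𝒜) →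
    (∀ n, τ (GHist S (n + 1)) ∈ S n) ∧
    Set.range (fun n => τ (GHist S (n + 1))) ∈ ℬ

/-- TWO has a winning strategy in the game `G_fin(𝒜,ℬ)`: in inning `n` ONE plays `Aₙ ∈ 𝒜`,
TWO answers a finite `Fₙ ⊆ Aₙ`; TWO wins iff `⋃ₙ Fₙ ∈ ℬ`. -/
def TwoWinsGfin {β : Type*} (𝒜 ℬ : Set (Set β)) : Prop :=
  ∃ τ : List (Set β) → Set β, ∀ S : ℕ → Set β, (∀ n, S n ∈ 𝒜) →
    (∀ n, τ (GHist S (n + 1)) ⊆ S n ∧ (τ (GHist S (n + 1))).Finite) ∧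
    (⋃ n, τ (GHist S (n + 1))) ∈ ℬ

/-- `(𝒜,ℬ)`-Lindelöf: every member of `𝒜` has a countable subset belonging to `ℬ`. -/
def LindelofFam {β : Type*} (𝒜 ℬ : Set (Set β)) : Prop :=
  ∀ S ∈ 𝒜, ∃ C ⊆ S, C.Countable ∧ C ∈ ℬ

/-- The selection principle `S₁(𝒜,ℬ)`. -/
def SelS1 {β : Type*} (𝒜 ℬ : Set (Set β)) : Prop :=
  ∀ A : ℕ → Set β, (∀ n, A n ∈ 𝒜) →
    ∃ b : ℕ → β, (∀ n, b n ∈ A n) ∧ Set.range b ∈ ℬ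

/-- The selection principle `S_fin(𝒜,ℬ)`. -/
def SelSfin {β : Type*} (𝒜 ℬ : Set (Set β)) : Prop :=
  ∀ A : ℕ → Set β, (∀ n, A n ∈ 𝒜) →
    ∃ F : ℕ → Set β, (∀ n, F n ⊆ A n ∧ (F n).Finite) ∧ (⋃ n, F n) ∈ ℬ

/-- `𝒪_X`: the family of open covers of `X`. -/
def OpenCovers (X : Type*) [TopologicalSpace X] : Set (Set (Set X)) :=
  {𝒰 | (∀ U ∈ 𝒰, IsOpen U) ∧ ⋃₀ 𝒰 = Set.univ}

/-- ONE has a winning strategy in the point-open game on `X`. -/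
def OneWinsPointOpen (X : Type*) [TopologicalSpace X] : Prop :=
  ∃ σ : List (Set X) → X, ∀ U : ℕ → Set X,
    (∀ n, IsOpen (U n) ∧ σ (GHist U n) ∈ U n) → Set.range U ∈ OpenCovers X

/-- TWO has a winning strategy in the point-open game on `X`. -/
def TwoWinsPointOpen (X : Type*) [TopologicalSpace X] : Prop :=
  ∃ τ : List X → Set X, ∀ x : ℕ → X,
    (∀ n, IsOpen (τ (GHist x (n + 1))) ∧ x n ∈ τ (GHist x (n + 1))) ∧
    Set.range (fun n => τ (GHist x (n + 1))) ∉ OpenCovers X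

/-- `𝔇_X`: the family of dense subsets of `X`. -/
def DenseSets (X : Type*) [TopologicalSpace X] : Set (Set X) :=
  {D | Dense D}

/-- ONE has a winning strategy in the point-picking game `G^D_ω(X)` of Berner and Juhász. -/
def OneWinsPointPicking (X : Type*) [TopologicalSpace X] : Prop :=
  ∃ σ : List X → Set X, (∀ h, IsOpen (σ h) ∧ (σ h).Nonempty) ∧
    ∀ x : ℕ → X, (∀ n, x n ∈ σ (GHist x n)) → Dense (Set.range x)

/-- TWO has a winning strategy in the point-picking game `G^D_ω(X)`. -/
def TwoWinsPointPicking (X : Type*) [TopologicalSpace X] : Prop :=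
  ∃ τ : List (Set X) → X, ∀ U : ℕ → Set X,
    (∀ n, IsOpen (U n) ∧ (U n).Nonempty) →
    (∀ n, τ (GHist U (n + 1)) ∈ U n) ∧
    ¬ Dense (Set.range fun n => τ (GHist U (n + 1)))

/-- `𝒟_X`: families of open sets whose union is dense in `X`. -/
def DenseUnionFams (X : Type*) [TopologicalSpace X] : Set (Set (Set X)) :=
  {𝒰 | (∀ U ∈ 𝒰, IsOpen U) ∧ Dense (⋃₀ 𝒰)}

/-- ONE has a winning strategy in Tkachuk's game `θ(X)`. -/
def OneWinsTheta (X : Type*) [TopologicalSpace X] : Prop :=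
  ∃ σ : List (Set X) → X, ∀ U : ℕ → Set X,
    (∀ n, IsOpen (U n) ∧ σ (GHist U n) ∈ U n) → Dense (⋃ n, U n)

/-- TWO has a winning strategy in Tkachuk's game `θ(X)`. -/
def TwoWinsTheta (X : Type*) [TopologicalSpace X] : Prop :=
  ∃ τ : List X → Set X, ∀ x : ℕ → X,
    (∀ n, IsOpen (τ (GHist x (n + 1))) ∧ x n ∈ τ (GHist x (n + 1))) ∧
    ¬ Dense (⋃ n, τ (GHist x (n + 1)))

/-- `Ω_x`: the family of subsets of `X` having `x` in their closure. -/
def OmegaPt {X : Type*} [TopologicalSpace X] (x : X) : Set (Set X) :=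
  {A | x ∈ closure A}

/-- ONE has a winning strategy in Gruenhage's game `G^c_{O,P}(X,x)`. -/
def OneWinsGruenhage {X : Type*} [TopologicalSpace X] (x : X) : Prop :=
  ∃ σ : List X → Set X, (∀ h, IsOpen (σ h) ∧ x ∈ σ h) ∧
    ∀ y : ℕ → X, (∀ n, y n ∈ σ (GHist y n)) → x ∈ closure (Set.range y)

/-- TWO has a winning strategy in Gruenhage's game `G^c_{O,P}(X,x)`. -/
def TwoWinsGruenhage {X : Type*} [TopologicalSpace X] (x : X) : Prop :=
  ∃ τ : List (Set X) → X, ∀ V : ℕ → Set X,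
    (∀ n, IsOpen (V n) ∧ x ∈ V n) →
    (∀ n, τ (GHist V (n + 1)) ∈ V n) ∧
    x ∉ closure (Set.range fun n => τ (GHist V (n + 1)))

/-- ONE has a winning strategy in the compact-open game on `X`. -/
def OneWinsCompactOpen (X : Type*) [TopologicalSpace X] : Prop :=
  ∃ σ : List (Set X) → Set X, (∀ h, IsCompact (σ h)) ∧
    ∀ U : ℕ → Set X, (∀ n, IsOpen (U n) ∧ σ (GHist U n) ⊆ U n) →
      (⋃ n, U n) = Set.univ

/-- `⪯` is downwards `P`-compatible. -/
def DownwardsCompat {α β : Type*} (R : α → β → Prop) (le : β → β → Prop) : Prop :=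
  ∀ a b₁ b₂, R a b₁ → R a b₂ → ∃ b, R a b ∧ le b b₁ ∧ le b b₂

/-- `⪯` is upwards `Q`-compatible. -/
def UpwardsCompat {γ β : Type*} (T : γ → β → Prop) (le : β → β → Prop) : Prop :=
  ∀ c b₁ b₂, T c b₁ → le b₁ b₂ → T c b₂

/-- `⪯` is countably downwards `P`-compatible. -/
def CountablyDownwardsCompat {α β : Type*} (R : α → β → Prop) (le : β → β → Prop) : Prop :=
  ∀ a, ∀ E : Set β, E.Countable → E.Nonempty → (∀ b ∈ E, R a b) →
    ∃ b', R a b' ∧ ∀ b ∈ E, le b' b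

/-- A relation is `ℵ₀`-preserving if some partial order on `B` is both upwards
compatible and countably downwards compatible with it. -/
def Aleph0Preserving {α β : Type*} (R : α → β → Prop) : Prop :=
  ∃ le : β → β → Prop, IsPartialOrder β le ∧
    UpwardsCompat R le ∧ CountablyDownwardsCompat R le

/-- `Dom_γ(T)`: the γ-dominating sequences of the relation `T`. -/
def GDomGamma {γ β : Type*} (T : γ → β → Prop) : Set (ℕ → β) :=
  {z | ∀ c : γ, {n : ℕ | ¬ T c (z n)}.Finite}

/-- ONE has a winning strategy in the game `G_γ(P,Q)`. -/
def OneWinsGgamma {α β γ : Type*} (R : α → β → Prop) (T : γ → β → Prop) : Prop :=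
  ∃ σ : List β → α, ∀ b : ℕ → β,
    (∀ n, R (σ (GHist b n)) (b n)) → b ∈ GDomGamma T

/-- TWO has a winning strategy in the game `G_γ(P,Q)`. -/
def TwoWinsGgamma {α β γ : Type*} (R : α → β → Prop) (T : γ → β → Prop) : Prop :=
  ∃ τ : List α → β, ∀ a : ℕ → α,
    (∀ n, R (a n) (τ (GHist a (n + 1)))) ∧
    (fun n => τ (GHist a (n + 1))) ∉ GDomGamma T

/-- ONE has a winning strategy in the game `G₁(𝒜, Dom_γ(T))`. -/
def OneWinsG1gamma {β γ : Type*} (𝒜 : Set (Set β)) (T : γ → β → Prop) : Prop :=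
  ∃ σ : List β → Set β, (∀ h, σ h ∈ 𝒜) ∧
    ∀ b : ℕ → β, (∀ n, b n ∈ σ (GHist b n)) → b ∉ GDomGamma T

/-- TWO has a winning strategy in the game `G₁(𝒜, Dom_γ(T))`. -/
def TwoWinsG1gamma {β γ : Type*} (𝒜 : Set (Set β)) (T : γ → β → Prop) : Prop :=
  ∃ τ : List (Set β) → β, ∀ S : ℕ → Set β, (∀ n, S n ∈ 𝒜) →
    (∀ n, τ (GHist S (n + 1)) ∈ S n) ∧
    (fun n => τ (GHist S (n + 1))) ∈ GDomGamma T

/-- The `ℵ₀`-modification of a relation: moves become nonempty countable subsets of `B`,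
dominated pointwise. -/
def CountMod {α β : Type*} (R : α → β → Prop) :
    α → {E : Set β // E.Countable ∧ E.Nonempty} → Prop :=
  fun a E => ∀ b ∈ E.1, R a b

private lemma ghist_eq_map {β : Type*} (y : ℕ → β) (n : ℕ) :
    GHist y n = (List.range n).map y := by
  apply List.ext_getElem
  · simp [GHist]
  · intro i h1 h2
    simp [GHist]

private lemma ghist_getD {β : Type*} (y : ℕ → β) (n k : ℕ) (hk : k < n) (d : β) :
    (GHist y n).getD k d = y k := by
  rw [List.getD_eq_getElem _ _ (by simpa [GHist] using hk)]
  simp [GHist, hk]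

private lemma ghist_succ {β : Type*} (y : ℕ → β) (n : ℕ) :
    GHist y (n + 1) = GHist y n ++ [y n] := by
  simp [ghist_eq_map, List.range_succ]

/-- Ancestor chain of inning `n` in the fixed tree structure given by pairing. -/
private def anc7 (n : ℕ) : List ℕ :=
  if h : (Nat.unpair n).1 = 0 then [] else
    anc7 ((Nat.unpair n).1 - 1) ++ [(Nat.unpair n).1 - 1]
termination_by n
decreasing_by
  have := Nat.unpair_left_le n
  omega

private lemma anc7_lt : ∀ n, ∀ k ∈ anc7 n, k < n := by
  intro n
  induction n using Nat.strong_induction_on with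
  | _ n ih =>
    intro k hk
    rw [anc7] at hk
    split at hk
    · simp at hk
    · rename_i h
      have hle := Nat.unpair_left_le n
      have hlt : (Nat.unpair n).1 - 1 < n := by omega
      simp only [List.mem_append, List.mem_singleton] at hk
      rcases hk with hk | rfl
      · exact lt_trans (ih _ hlt k hk) hlt
      · exact hlt

private lemma anc7_pair0 (j : ℕ) : anc7 (Nat.pair 0 j) = [] := by
  rw [anc7]
  simp [Nat.unpair_pair]

private lemma anc7_pairS (m j : ℕ) : anc7 (Nat.pair (m + 1) j) = anc7 m ++ [m] := by
  rw [anc7]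
  simp [Nat.unpair_pair]

/-- If ONE has a winning strategy in `G(P',Q')` and in `G(P,Q)`, then
ONE has a winning strategy in `G(P⊗P', Q⊗Q')`. -/
theorem statement7 {α β γ α' β' γ' : Type*}
    [Nonempty α] [Nonempty γ] [Nonempty α'] [Nonempty γ']
    (R : α → β → Prop) (T : γ → β → Prop)
    (R' : α' → β' → Prop) (T' : γ' → β' → Prop)
    (hR : IsTotalRel R) (hT : IsTotalRel T)
    (hR' : IsTotalRel R') (hT' : IsTotalRel T')
    (hwin' : OneWinsG R' T')
    (hwin : OneWinsG R T) :
    OneWinsG (GProd R R') (GProd T T') := by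
  classical
  obtain ⟨σ, hσ⟩ := hwin
  obtain ⟨σ', hσ'⟩ := hwin'
  obtain ⟨a0⟩ := (inferInstance : Nonempty α)
  obtain ⟨b0, -⟩ := hR a0
  obtain ⟨a0'⟩ := (inferInstance : Nonempty α')
  obtain ⟨b0', -⟩ := hR' a0'
  refine ⟨fun h =>
    (σ ((List.range (Nat.unpair h.length).2).map fun t =>
        (h.getD (Nat.pair (Nat.unpair h.length).1 t) (b0, b0')).1),
     σ' ((anc7 h.length).map fun k => (h.getD k (b0, b0')).2)), ?_⟩
  intro b hb
  have len : ∀ n, (GHist b n).length = n := fun n => by simp [GHist]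
  -- first coordinate: on the children of each node `i`, ONE runs a full copy of `σ`
  have hrun1 : ∀ i j,
      R (σ (GHist (fun t => (b (Nat.pair i t)).1) j)) ((b (Nat.pair i j)).1) := by
    intro i j
    have heq : ((List.range (Nat.unpair (GHist b (Nat.pair i j)).length).2).map fun t =>
        ((GHist b (Nat.pair i j)).getD
          (Nat.pair (Nat.unpair (GHist b (Nat.pair i j)).length).1 t) (b0, b0')).1)
        = GHist (fun t => (b (Nat.pair i t)).1) j := by
      rw [len, Nat.unpair_pair, ghist_eq_map (fun t => (b (Nat.pair i t)).1)]
      refine List.map_congr_left fun t ht => ?_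
      rw [ghist_getD b _ _ (Nat.pair_lt_pair_right i (List.mem_range.mp ht))]
    rw [← heq]
    exact (hb (Nat.pair i j)).1
  have hdom1 : ∀ i c, ∃ j, T c ((b (Nat.pair i j)).1) := by
    intro i c
    obtain ⟨x, hx, hTx⟩ := hσ (fun t => (b (Nat.pair i t)).1) (fun j => hrun1 i j) c
    obtain ⟨j, rfl⟩ := hx
    exact ⟨j, hTx⟩
  choose J hJ using hdom1
  rintro ⟨c, c'⟩
  -- the branch through the tree along which first-coordinate responses dominate `c`
  obtain ⟨e, he0, heS⟩ : ∃ e : ℕ → ℕ, e 0 = Nat.pair 0 (J 0 c) ∧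
      ∀ k, e (k + 1) = Nat.pair (e k + 1) (J (e k + 1) c) :=
    ⟨fun k => Nat.rec (Nat.pair 0 (J 0 c))
      (fun _ p => Nat.pair (p + 1) (J (p + 1) c)) k, rfl, fun _ => rfl⟩
  have hTc : ∀ k, T c ((b (e k)).1) := by
    intro k
    cases k with
    | zero => rw [he0]; exact hJ 0 c
    | succ k => rw [heS]; exact hJ (e k + 1) c
  have hanc : ∀ k, anc7 (e k) = GHist e k := by
    intro k
    induction k with
    | zero => rw [he0, anc7_pair0]; simp [GHist]
    | succ k ih => rw [heS, anc7_pairS, ih, ghist_succ]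
  -- second coordinate: along the branch, ONE runs a full copy of `σ'`
  have hrun2 : ∀ k,
      R' (σ' (GHist (fun t => (b (e t)).2) k)) ((b (e k)).2) := by
    intro k
    have heq : ((anc7 (GHist b (e k)).length).map fun t =>
        ((GHist b (e k)).getD t (b0, b0')).2)
        = GHist (fun t => (b (e t)).2) k := by
      rw [len]
      have hmc : ∀ t ∈ anc7 (e k),
          ((GHist b (e k)).getD t (b0, b0')).2 = (b t).2 := fun t ht => by
        rw [ghist_getD b _ _ (anc7_lt (e k) t ht)]
      rw [List.map_congr_left hmc, hanc k, ghist_eq_map e,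
        List.map_map, ghist_eq_map (fun t => (b (e t)).2)]
      rfl
    rw [← heq]
    exact (hb (e k)).2
  obtain ⟨x, hx, hT'x⟩ := hσ' (fun t => (b (e t)).2) hrun2 c'
  obtain ⟨k, rfl⟩ := hx
  exact ⟨b (e k), ⟨e k, rfl⟩, hTc k, hT'x⟩
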